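/- Let 𝒞 be a class of finite graphs that is uniformly quasi-wide with margins N : ℕ×ℕ → ℕ and s : ℕ → ℕ, and let c ≥ 1 be an integer. Then the class 𝒞^c consisting of all subgraphs of c-blowups G•K_c of graphs G ∈ 𝒞 is uniformly quasi-wide with margins (r,m) ↦ c·N(r,m) and r ↦ c·s(r). -/

import Mathlib

open SimpleGraph

/-- A finite simple graph: a bundled finite vertex type together with a simple graph on it. -/
structure FinGraph : Type 1 where
  V : Type
  fintypeV : Fintype V
  graph : SimpleGraph V

attribute [instance] FinGraph.fintypeV

/-- The set `S` induces a subgraph of `G` of radius at most `r`: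
there is a center `c ∈ S` from which every vertex of `S` is at distance at most `r`
inside the subgraph induced by `S`. -/
def hasRadiusLE {V : Type} (G : SimpleGraph V) (S : Set V) (r : ℕ) : Prop :=
  ∃ c : S, ∀ x : S, (G.induce S).edist c x ≤ (r : ℕ∞)

/-- `H` is a depth-`r` minor of `G`: there is a minor model of `H` in `G` with
pairwise disjoint connected branch sets of radius at most `r`. -/
def IsDepthMinor {W V : Type} (r : ℕ) (H : SimpleGraph W) (G : SimpleGraph V) : Prop :=
  ∃ I : W → Set V,
    (∀ u, hasRadiusLE G (I u) r) ∧
    (Pairwise fun u v => Disjoint (I u) (I v)) ∧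
    (∀ u v, H.Adj u v → ∃ a ∈ I u, ∃ b ∈ I v, G.Adj a b)

/-- A class of finite graphs is nowhere dense if there is `f : ℕ → ℕ` such that
`K_{f r}` is not a depth-`r` minor of any member, for every `r`. -/
def NowhereDense (C : Set FinGraph) : Prop :=
  ∃ f : ℕ → ℕ, ∀ r : ℕ, ∀ G ∈ C, ¬ IsDepthMinor r (completeGraph (Fin (f r))) G.graph

/-- `H` is (isomorphic to) a subgraph of `G`. -/
def IsSubgraphOf (H G : FinGraph) : Prop :=
  ∃ f : H.V ↪ G.V, ∀ u v, H.graph.Adj u v → G.graph.Adj (f u) (f v)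

/-- A class of graphs is monotone if it is closed under taking subgraphs. -/
def MonotoneClass (C : Set FinGraph) : Prop :=
  ∀ G ∈ C, ∀ H : FinGraph, IsSubgraphOf H G → H ∈ C

/-- The closed ball of radius `r` around `v`: `N_r[v]`. -/
def ball {V : Type} (G : SimpleGraph V) (r : ℕ) (v : V) : Set V :=
  {u | G.edist u v ≤ (r : ℕ∞)}

/-- The `r`-neighborhood complexity `ν_r(G,A)`. -/
noncomputable def nu {V : Type} (G : SimpleGraph V) (r : ℕ) (A : Set V) : ℕ :=
  {S : Set V | ∃ v : V, S = ball G r v ∩ A}.ncard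

/-- The value of the `r`-distance profile of `u` at `x`:
`dist_G(u,x)` if it is at most `r`, and `∞` otherwise. -/
noncomputable def profVal {V : Type} (G : SimpleGraph V) (r : ℕ) (u x : V) : ℕ∞ :=
  if G.edist u x ≤ (r : ℕ∞) then G.edist u x else ⊤

/-- The distance profile complexity `ν̂_r(G,A)`: the number of distinct
`r`-distance profiles `π_r[u,A] : A → {0,…,r,∞}` over `u ∈ V(G)`. -/
noncomputable def nuHat {V : Type} (G : SimpleGraph V) (r : ℕ) (A : Set V) : ℕ :=
  {f : ↥A → ℕ∞ | ∃ u : V, f = fun x : ↥A => profVal G r u ↑x}.ncard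

/-- A family `F` of subsets shatters `X` if every subset of `X` is an intersection of
`X` with a member of `F`. -/
def Shatters {U : Type} (F : Set (Set U)) (X : Set U) : Prop :=
  ∀ Y ⊆ X, ∃ S ∈ F, X ∩ S = Y

/-- The family `F` has VC-dimension at most `d`. -/
def VCDimLE {U : Type} (F : Set (Set U)) (d : ℕ) : Prop :=
  ∀ X : Set U, Shatters F X → X.ncard ≤ d

/-- `WReach_r[G,L,v]`: the set of vertices weakly `r`-reachable from `v` with respect to
the linear order `L`: vertices `u` joined to `v` by a path of length at most `r` on which
`u` is the `L`-least vertex. -/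
def WReach {V : Type} (G : SimpleGraph V) (L : LinearOrder V) (r : ℕ) (v : V) : Set V :=
  {u | ∃ p : G.Walk u v, p.IsPath ∧ p.length ≤ r ∧ ∀ x ∈ p.support, L.le u x}

/-- `B` is `r`-independent in `G`: distinct vertices of `B` are at distance more than `r`. -/
def RIndep {V : Type} (G : SimpleGraph V) (r : ℕ) (B : Set V) : Prop :=
  ∀ u ∈ B, ∀ v ∈ B, u ≠ v → (r : ℕ∞) < G.edist u v

/-- The length of a shortest `A`-avoiding path from `u` to `v`
(all vertices except possibly `v` lie outside `A`); `∞` if there is none. -/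
noncomputable def avoidDist {V : Type} (G : SimpleGraph V) (A : Set V) (u v : V) : ℕ∞ :=
  sInf {n : ℕ∞ | ∃ p : G.Walk u v, p.IsPath ∧ (∀ x ∈ p.support, x ≠ v → x ∉ A) ∧ (p.length : ℕ∞) = n}

/-- The value of the `r`-projection profile `ρ_r[u,A]` at `v`. -/
noncomputable def projProfVal {V : Type} (G : SimpleGraph V) (r : ℕ) (A : Set V) (u v : V) : ℕ∞ :=
  if avoidDist G A u v ≤ (r : ℕ∞) then avoidDist G A u v else ⊤

/-- The `r`-projection `M_r(u,A)` of `u` on `A`. -/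
def Mproj {V : Type} (G : SimpleGraph V) (r : ℕ) (A : Set V) (u : V) : Set V :=
  {v ∈ A | avoidDist G A u v ≤ (r : ℕ∞)}

/-- The projection profile complexity `μ̂_r(G,A)`: the number of distinct
`r`-projection profiles `ρ_r[u,A]` over `u ∈ V(G) ∖ A`. -/
noncomputable def muHat {V : Type} (G : SimpleGraph V) (r : ℕ) (A : Set V) : ℕ :=
  {f : ↥A → ℕ∞ | ∃ u : V, u ∉ A ∧ f = fun v : ↥A => projProfVal G r A u ↑v}.ncard

/-- `D` is a `(Z,r)`-dominator in `G`: every vertex of `Z` is at distance at most `r`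
from some vertex of `D`. -/
def IsDominator {V : Type} (G : SimpleGraph V) (r : ℕ) (Z D : Set V) : Prop :=
  ∀ z ∈ Z, ∃ d ∈ D, G.edist z d ≤ (r : ℕ∞)

/-- `D` is a minimum-size `(Z,r)`-dominator in `G`. -/
def IsMinDominator {V : Type} (G : SimpleGraph V) (r : ℕ) (Z D : Set V) : Prop :=
  IsDominator G r Z D ∧ ∀ D' : Set V, IsDominator G r Z D' → D.ncard ≤ D'.ncard

/-- `Z` is an `r`-domination core of `G`: every minimum-size `(Z,r)`-dominator
is an `r`-dominating set of `G`. -/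
def IsDomCore {V : Type} (G : SimpleGraph V) (r : ℕ) (Z : Set V) : Prop :=
  ∀ D : Set V, IsMinDominator G r Z D → IsDominator G r Set.univ D

/-- `ds_r(G,Z)`: the minimum size of a `(Z,r)`-dominator in `G`. -/
noncomputable def dsr {V : Type} (G : SimpleGraph V) (r : ℕ) (Z : Set V) : ℕ :=
  sInf {n : ℕ | ∃ D : Set V, IsDominator G r Z D ∧ D.ncard = n}

/-- A class of finite graphs is uniformly quasi-wide with margins `N` and `s`. -/
def UQW (C : Set FinGraph) (N : ℕ → ℕ → ℕ) (s : ℕ → ℕ) : Prop :=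
  ∀ r m : ℕ, ∀ G ∈ C, ∀ A : Set G.V, N r m ≤ A.ncard →
    ∃ S : Set G.V, S.ncard ≤ s r ∧
      ∃ B ⊆ A \ S, m ≤ B.ncard ∧
        ∀ u v : ↥(Sᶜ), (u : G.V) ∈ B → (v : G.V) ∈ B → u ≠ v →
          ((r : ℕ) : ℕ∞) < (G.graph.induce Sᶜ).edist u v

/-- The `c`-blowup `G • K_c` of a finite graph `G`. -/
def blowup (G : FinGraph) (c : ℕ) : FinGraph where
  V := G.V × Fin c
  fintypeV := inferInstance
  graph :=
    { Adj := fun p q => (p.1 = q.1 ∧ p.2 ≠ q.2) ∨ G.graph.Adj p.1 q.1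
      symm := by
        constructor
        rintro p q (⟨h1, h2⟩ | h)
        · exact Or.inl ⟨h1.symm, h2.symm⟩
        · exact Or.inr h.symm
      loopless := by
        constructor
        rintro p (⟨-, h⟩ | h)
        · exact h rfl
        · exact G.graph.loopless.irrefl p.1 h }

/-- If `C` is uniformly quasi-wide with margins `N` and `s`, then the class
of all subgraphs of `c`-blowups of members of `C` is uniformly quasi-wide with margins
`(r,m) ↦ c·N r m` and `r ↦ c·s r`. -/

private lemma walk_proj {V₁ V₂ : Type} {G₁ : SimpleGraph V₁} {G₂ : SimpleGraph V₂}
    {φ : V₁ → V₂} (h : ∀ a b : V₁, G₁.Adj a b → G₂.Adj (φ a) (φ b) ∨ φ a = φ b)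
    {u v : V₁} (p : G₁.Walk u v) :
    ∃ q : G₂.Walk (φ u) (φ v), q.length ≤ p.length := by
  induction p with
  | nil => exact ⟨.nil, le_refl _⟩
  | @cons a b w hadj p ih =>
    obtain ⟨q, hq⟩ := ih
    rcases h _ _ hadj with h' | h'
    · exact ⟨.cons h' q, by simpa using Nat.succ_le_succ hq⟩
    · exact ⟨q.copy h'.symm rfl, by simpa using hq.trans (Nat.le_succ _)⟩

private lemma edist_proj {V₁ V₂ : Type} {G₁ : SimpleGraph V₁} {G₂ : SimpleGraph V₂}
    {φ : V₁ → V₂} (h : ∀ a b : V₁, G₁.Adj a b → G₂.Adj (φ a) (φ b) ∨ φ a = φ b)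
    (u v : V₁) : G₂.edist (φ u) (φ v) ≤ G₁.edist u v := by
  refine le_iInf fun p => ?_
  obtain ⟨q, hq⟩ := walk_proj h p
  exact (SimpleGraph.edist_le q).trans (by exact_mod_cast hq)

private lemma ncard_le_mul_ncard_image {α β : Type} [Fintype α] (A : Set α) (g : α → β)
    (c : ℕ) (h : ∀ b : β, {x | x ∈ A ∧ g x = b}.ncard ≤ c) :
    A.ncard ≤ c * (g '' A).ncard := by
  classical
  have hA : A.Finite := A.toFinite
  have him : (g '' A).Finite := hA.image g
  have h1 : A.ncard = hA.toFinset.card := Set.ncard_eq_toFinset_card A hA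
  have h2 : (g '' A).ncard = (hA.toFinset.image g).card := by
    rw [Set.ncard_eq_toFinset_card _ him]
    congr 1
    ext b
    simp [Set.mem_ofPred_eq]
  rw [h1, h2]
  refine Finset.card_le_mul_card_image hA.toFinset c fun b _ => ?_
  have : (hA.toFinset.filter fun x => g x = b) = {x | x ∈ A ∧ g x = b}.toFinite.toFinset := by
    ext x; simp [Set.mem_ofPred_eq]
  rw [this, ← Set.ncard_eq_toFinset_card _ {x | x ∈ A ∧ g x = b}.toFinite]
  exact h b

theorem uqw_blowup_class
    (C : Set FinGraph) (N : ℕ → ℕ → ℕ) (s : ℕ → ℕ) (hC : UQW C N s)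
    (c : ℕ) (hc : 1 ≤ c) :
    UQW {H : FinGraph | ∃ G ∈ C, IsSubgraphOf H (blowup G c)}
      (fun r m => c * N r m) (fun r => c * s r) := by
  rintro r m H ⟨G, hG, f, hf⟩ A hA
  classical
  set π : H.V → G.V := fun x => (f x).1 with hπ
  -- fibers of π have at most c elements
  have hfib : ∀ (T : Set H.V) (b : G.V), {x | x ∈ T ∧ π x = b}.ncard ≤ c := by
    intro T b
    have hinj : Set.InjOn (fun x => (f x).2) {x | x ∈ T ∧ π x = b} := by
      rintro x ⟨-, hx⟩ y ⟨-, hy⟩ hxy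
      exact f.injective (Prod.ext (hx.trans hy.symm) hxy)
    calc {x | x ∈ T ∧ π x = b}.ncard
        = ((fun x => (f x).2) '' {x | x ∈ T ∧ π x = b}).ncard :=
          (Set.ncard_image_of_injOn hinj).symm
      _ ≤ (Set.univ : Set (Fin c)).ncard :=
          Set.ncard_le_ncard (Set.subset_univ _) Set.finite_univ
      _ = c := by simp [Set.ncard_univ]
  have hcpos : 0 < c := hc
  have hA' : N r m ≤ (π '' A).ncard := by
    have h1 : A.ncard ≤ c * (π '' A).ncard :=
      ncard_le_mul_ncard_image A π c (fun b => hfib A b)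
    exact Nat.le_of_mul_le_mul_left (hA.trans h1) hcpos
  obtain ⟨S', hS'card, B', hB'sub, hB'card, hB'ind⟩ := hC r m G hG (π '' A) hA'
  refine ⟨π ⁻¹' S', ?_, ?_⟩
  · -- |π ⁻¹' S'| ≤ c * s r
    have h1 : (π ⁻¹' S').ncard ≤ c * (π '' (π ⁻¹' S')).ncard :=
      ncard_le_mul_ncard_image _ π c (fun b => hfib _ b)
    have h2 : (π '' (π ⁻¹' S')).ncard ≤ S'.ncard :=
      Set.ncard_le_ncard (Set.image_preimage_subset _ _) S'.toFinite
    calc (π ⁻¹' S').ncard ≤ c * (π '' (π ⁻¹' S')).ncard := h1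
      _ ≤ c * S'.ncard := Nat.mul_le_mul_left c h2
      _ ≤ c * s r := Nat.mul_le_mul_left c hS'card
  rcases isEmpty_or_nonempty H.V with hemp | hne
  · -- empty vertex set: B' must be empty, so m = 0
    have hAe : A = ∅ := Set.eq_empty_of_isEmpty A
    have hB'e : B' = ∅ := by
      have := hB'sub.trans (Set.diff_subset)
      rw [hAe] at this
      simpa using this
    refine ⟨∅, by simp, ?_, ?_⟩
    · simpa [hB'e] using hB'card
    · intro u v hu
      simp at hu
  · -- choose one preimage in A for each element of B'
    set g : G.V → H.V := Function.invFunOn π A with hg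
    have hmem : ∀ b ∈ B', b ∈ π '' A := fun b hb => (hB'sub hb).1
    have hgA : ∀ b ∈ B', g b ∈ A := by
      intro b hb
      obtain ⟨a, ha, hab⟩ := hmem b hb
      exact Function.invFunOn_mem ⟨a, ha, hab⟩
    have hgπ : ∀ b ∈ B', π (g b) = b := by
      intro b hb
      obtain ⟨a, ha, hab⟩ := hmem b hb
      exact Function.invFunOn_eq ⟨a, ha, hab⟩
    refine ⟨g '' B', ?_, ?_, ?_⟩
    · rintro x ⟨b, hb, rfl⟩
      refine ⟨hgA b hb, ?_⟩
      intro hmemS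
      exact (hB'sub hb).2 (by rwa [Set.mem_preimage, hgπ b hb] at hmemS)
    · have : Set.InjOn g B' := by
        intro x hx y hy hxy
        rw [← hgπ x hx, ← hgπ y hy, hxy]
      rw [Set.ncard_image_of_injOn this]
      exact hB'card
    · intro u v hu hv huv
      -- project to G
      have hcompl : ∀ x : ↥((π ⁻¹' S')ᶜ), π (x : H.V) ∈ S'ᶜ := fun x => x.2
      set φ : ↥((π ⁻¹' S')ᶜ) → ↥(S'ᶜ) := fun x => ⟨π (x : H.V), hcompl x⟩ with hφ
      have hhom : ∀ a b : ↥((π ⁻¹' S')ᶜ), (H.graph.induce ((π ⁻¹' S')ᶜ)).Adj a b →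
          (G.graph.induce (S'ᶜ)).Adj (φ a) (φ b) ∨ φ a = φ b := by
        intro a b hab
        have hab' : H.graph.Adj (a : H.V) (b : H.V) := hab
        rcases hf _ _ hab' with ⟨h1, -⟩ | h1
        · exact Or.inr (Subtype.ext h1)
        · exact Or.inl h1
      obtain ⟨bu, hbu, hbu'⟩ := hu
      obtain ⟨bv, hbv, hbv'⟩ := hv
      have hπu : π (u : H.V) = bu := by rw [← hbu']; exact hgπ bu hbu
      have hπv : π (v : H.V) = bv := by rw [← hbv']; exact hgπ bv hbv
      have hφu : (φ u : G.V) ∈ B' := by simpa [hφ, hπu] using hbu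
      have hφv : (φ v : G.V) ∈ B' := by simpa [hφ, hπv] using hbv
      have hne' : φ u ≠ φ v := by
        intro hEq
        apply huv
        have : bu = bv := by
          rw [← hπu, ← hπv]
          exact congrArg Subtype.val hEq
        exact Subtype.ext (by rw [← hbu', ← hbv', this])
      exact lt_of_lt_of_le (hB'ind (φ u) (φ v) hφu hφv hne') (edist_proj hhom u v)
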